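/- (Quadratic majorization of the logistic loss.) For all real numbers v and v₀: -log(π(v)) ≤ -log(π(v₀)) - (1 - π(v₀))·(v - v₀) + (1/8)·(v - v₀)², where π(x) = exp(x)/(exp(x)+1) is the logistic function. Moreover equality holds at v = v₀. -/

import Mathlib

/-- The logistic function π(x) = exp(x)/(exp(x)+1). -/
noncomputable def logistic (x : ℝ) : ℝ := Real.exp x / (Real.exp x + 1)

lemma exp_add_one_pos (x : ℝ) : (0:ℝ) < Real.exp x + 1 := by positivity

lemma logistic_pos (x : ℝ) : 0 < logistic x := by
  unfold logistic; positivity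

lemma logistic_lt_one (x : ℝ) : logistic x < 1 := by
  unfold logistic
  rw [div_lt_one (exp_add_one_pos x)]
  linarith

lemma hasDerivAt_f (x : ℝ) :
    HasDerivAt (fun x => Real.log (Real.exp x + 1)) (logistic x) x := by
  have h := ((Real.hasDerivAt_exp x).add_const 1).log (exp_add_one_pos x).ne'
  simpa [logistic] using h

lemma hasDerivAt_logistic (x : ℝ) :
    HasDerivAt logistic (logistic x * (1 - logistic x)) x := by
  have h := (Real.hasDerivAt_exp x).div ((Real.hasDerivAt_exp x).add_const 1)
    (exp_add_one_pos x).ne'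
  have : Real.exp x * (Real.exp x + 1) - Real.exp x * Real.exp x =
      Real.exp x := by ring
  refine h.congr_deriv ?_
  unfold logistic
  field_simp

lemma logistic_deriv_bound (x : ℝ) : ‖logistic x * (1 - logistic x)‖ ≤ 1/4 := by
  have h1 := logistic_pos x
  have h2 := logistic_lt_one x
  rw [Real.norm_eq_abs, abs_of_nonneg (by nlinarith)]
  nlinarith [sq_nonneg (logistic x - 1/2)]

lemma logistic_lipschitz (a b : ℝ) : ‖logistic b - logistic a‖ ≤ (1/4) * ‖b - a‖ :=
  Convex.norm_image_sub_le_of_norm_hasDerivWithin_le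
    (f' := fun x => logistic x * (1 - logistic x))
    (fun x _ => (hasDerivAt_logistic x).hasDerivWithinAt)
    (fun x _ => logistic_deriv_bound x) convex_univ trivial trivial

lemma key (x y : ℝ) : Real.log (Real.exp x + 1) ≤
    Real.log (Real.exp y + 1) + logistic y * (x - y) + (x - y)^2 / 8 := by
  set g : ℝ → ℝ := fun x =>
    Real.log (Real.exp x + 1) - logistic y * (x - y) - (x - y)^2 / 8 with hg
  have hgderiv : ∀ x, HasDerivAt g (logistic x - logistic y - (x - y)/4) x := by
    intro x
    have h1 := hasDerivAt_f x
    have h2 : HasDerivAt (fun x : ℝ => logistic y * (x - y)) (logistic y) x := by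
      simpa using ((hasDerivAt_id x).sub_const y).const_mul (logistic y)
    have h3 : HasDerivAt (fun x : ℝ => (x - y)^2 / 8) ((x - y)/4) x := by
      have := (((hasDerivAt_id x).sub_const y).pow 2).div_const 8
      simp only [id_eq] at this
      refine this.congr_deriv ?_
      ring
    exact (h1.sub h2).sub h3
  have hgd : ∀ x, deriv g x = logistic x - logistic y - (x - y)/4 :=
    fun x => (hgderiv x).deriv
  suffices h : g x ≤ g y by
    simp only [hg] at h
    have : (y - y : ℝ) = 0 := by ring
    simp only [this] at h
    nlinarith [h]
  rcases le_total y x with hxy | hxy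
  · have hmono : AntitoneOn g (Set.Ici y) := by
      apply antitoneOn_of_deriv_nonpos (convex_Ici y)
      · exact fun z _ => (hgderiv z).continuousAt.continuousWithinAt
      · exact fun z _ => (hgderiv z).differentiableAt.differentiableWithinAt
      · intro z hz
        rw [interior_Ici] at hz
        have hzy : y < z := hz
        rw [hgd]
        have hl := logistic_lipschitz y z
        rw [Real.norm_eq_abs, Real.norm_eq_abs,
          abs_of_nonneg (by linarith : (0:ℝ) ≤ z - y)] at hl
        have := abs_le.1 hl
        linarith [this.1, this.2]
    exact hmono (le_refl y) hxy hxy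
  · have hmono : MonotoneOn g (Set.Iic y) := by
      apply monotoneOn_of_deriv_nonneg (convex_Iic y)
      · exact fun z _ => (hgderiv z).continuousAt.continuousWithinAt
      · exact fun z _ => (hgderiv z).differentiableAt.differentiableWithinAt
      · intro z hz
        rw [interior_Iic] at hz
        have hzy : z < y := hz
        rw [hgd]
        have hl := logistic_lipschitz z y
        rw [Real.norm_eq_abs, Real.norm_eq_abs,
          abs_of_nonneg (by linarith : (0:ℝ) ≤ y - z)] at hl
        have := abs_le.1 hl
        linarith [this.1, this.2]
    exact hmono hxy (le_refl y) hxy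

lemma neg_log_logistic (x : ℝ) :
    -Real.log (logistic x) = Real.log (Real.exp x + 1) - x := by
  unfold logistic
  rw [Real.log_div (Real.exp_ne_zero x) (exp_add_one_pos x).ne', Real.log_exp]
  ring

/-- Quadratic majorization of the logistic loss:
-log(π(v)) ≤ -log(π(v₀)) - (1 - π(v₀))(v - v₀) + (1/8)(v - v₀)², with equality
at v = v₀. -/
theorem logistic_loss_quadratic_majorization (v v₀ : ℝ) :
    -Real.log (logistic v) ≤
      -Real.log (logistic v₀) - (1 - logistic v₀) * (v - v₀)
        + (1 / 8) * (v - v₀) ^ 2 ∧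
    (v = v₀ →
      -Real.log (logistic v) =
        -Real.log (logistic v₀) - (1 - logistic v₀) * (v - v₀)
          + (1 / 8) * (v - v₀) ^ 2) := by
  constructor
  · have h := key v v₀
    rw [neg_log_logistic, neg_log_logistic]
    nlinarith [h]
  · intro h
    subst h
    ring
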